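/- arXiv:2001.04573 — 10 statements merged into one kernel-verified Lean document; each statement's English description precedes it below -/
import Mathlib

section
/- Let I ⊆ ℝ be an interval with at least two points and f : I → I continuous with f^n = id for some odd n ≥ 1. Then f = id. -/
theorem stmt_6 (I : Set ℝ) (hI : Convex ℝ I) (hI2 : ∃ a ∈ I, ∃ b ∈ I, a ≠ b)
    (f : ℝ → ℝ) (hf : ContinuousOn f I) (hmap : Set.MapsTo f I I)
    (n : ℕ) (hn : Odd n) (hn1 : 1 ≤ n)
    (hper : ∀ x ∈ I, f^[n] x = x) :
    ∀ x ∈ I, f x = x := by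
  obtain ⟨a, ha, b, hb, hab⟩ := hI2
  -- wlog a < b
  wlog hlt : a < b generalizing a b
  · exact this b hb a ha hab.symm (hab.lt_or_gt.resolve_left hlt)
  have hoc : Set.OrdConnected I := hI.ordConnected
  have hicc : ∀ {c d : ℝ}, c ∈ I → d ∈ I → Set.Icc c d ⊆ I := fun hc hd => hoc.out hc hd
  have hit : ∀ k, ∀ x ∈ I, f^[k] x ∈ I := by
    intro k
    induction k with
    | zero => intro x hx; simpa using hx
    | succ k ih =>
      intro x hx
      rw [Function.iterate_succ_apply']
      exact hmap (ih x hx)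
  -- injectivity on I
  obtain ⟨m, hm⟩ : ∃ m, n = m + 1 := ⟨n - 1, (Nat.succ_pred_eq_of_pos hn1).symm⟩
  have hinj : Set.InjOn f I := by
    intro x hx y hy hxy
    have h1 : f^[n] x = x := hper x hx
    have h2 : f^[n] y = y := hper y hy
    rw [hm, Function.iterate_succ_apply, hxy, ← Function.iterate_succ_apply] at h1
    rw [hm] at h2
    rw [← h1, h2]
  -- dichotomy
  have hdichot : StrictMonoOn f I ∨ StrictAntiOn f I := by
    rcases lt_or_gt_of_ne (fun h => hab (hinj ha hb h)) with hfab | hfab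
    · left
      intro x hx y hy hxy
      set c := min x a with hc
      set d := max y b with hd
      have hcI : c ∈ I := by
        rcases min_cases x a with ⟨h, _⟩ | ⟨h, _⟩ <;> rw [hc, h] <;> assumption
      have hdI : d ∈ I := by
        rcases max_cases y b with ⟨h, _⟩ | ⟨h, _⟩ <;> rw [hd, h] <;> assumption
      have hcd : c ≤ d := le_trans (min_le_left x a) (le_trans hxy.le (le_max_left y b))
      have hsub : Set.Icc c d ⊆ I := hicc hcI hdI
      rcases ContinuousOn.strictMonoOn_of_injOn_Icc' hcd (hf.mono hsub) (hinj.mono hsub)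
        with hmono | hanti
      · exact hmono ⟨min_le_left x a, hxy.le.trans (le_max_left y b)⟩
          ⟨(min_le_left x a).trans hxy.le, le_max_left y b⟩ hxy
      · exfalso
        have := hanti ⟨min_le_right x a, hlt.le.trans (le_max_right y b)⟩
          ⟨(min_le_right x a).trans hlt.le, le_max_right y b⟩ hlt
        exact absurd hfab (not_lt.mpr this.le)
    · right
      intro x hx y hy hxy
      set c := min x a with hc
      set d := max y b with hd
      have hcI : c ∈ I := by
        rcases min_cases x a with ⟨h, _⟩ | ⟨h, _⟩ <;> rw [hc, h] <;> assumption
      have hdI : d ∈ I := by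
        rcases max_cases y b with ⟨h, _⟩ | ⟨h, _⟩ <;> rw [hd, h] <;> assumption
      have hcd : c ≤ d := le_trans (min_le_left x a) (le_trans hxy.le (le_max_left y b))
      have hsub : Set.Icc c d ⊆ I := hicc hcI hdI
      rcases ContinuousOn.strictMonoOn_of_injOn_Icc' hcd (hf.mono hsub) (hinj.mono hsub)
        with hmono | hanti
      · exfalso
        have := hmono ⟨min_le_right x a, hlt.le.trans (le_max_right y b)⟩
          ⟨(min_le_right x a).trans hlt.le, le_max_right y b⟩ hlt
        exact absurd hfab (not_lt.mpr this.le)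
      · exact hanti ⟨min_le_left x a, hxy.le.trans (le_max_left y b)⟩
          ⟨(min_le_left x a).trans hxy.le, le_max_left y b⟩ hxy
  rcases hdichot with hmono | hanti
  · -- strictly increasing: f x = x for all x
    intro x hx
    by_contra hne
    rcases lt_or_gt_of_ne hne with hfx | hfx
    · -- f x < x : iterates strictly decreasing
      have key : StrictAnti (fun k => f^[k] x) := by
        apply strictAnti_nat_of_succ_lt
        intro k
        induction k with
        | zero => simpa using hfx
        | succ k ih =>
          have h := hmono (hit (k + 1) x hx) (hit k x hx) ih
          rwa [← Function.iterate_succ_apply' f (k + 1),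
            ← Function.iterate_succ_apply' f k] at h
      have : f^[n] x < f^[0] x := key (Nat.pos_of_ne_zero (by omega))
      rw [hper x hx] at this
      simp at this
    · have key : StrictMono (fun k => f^[k] x) := by
        apply strictMono_nat_of_lt_succ
        intro k
        induction k with
        | zero => simpa using hfx
        | succ k ih =>
          have h := hmono (hit k x hx) (hit (k + 1) x hx) ih
          rwa [← Function.iterate_succ_apply' f (k + 1),
            ← Function.iterate_succ_apply' f k] at h
      have : f^[0] x < f^[n] x := key (Nat.pos_of_ne_zero (by omega))
      rw [hper x hx] at this
      simp at this
  · -- strictly decreasing: contradiction with f^[n] = id, n odd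
    exfalso
    obtain ⟨p, hp⟩ := hn
    have key : ∀ q, ∀ x ∈ I, ∀ y ∈ I, x < y → f^[2 * q + 1] y < f^[2 * q + 1] x := by
      intro q
      induction q with
      | zero => intro x hx y hy hxy; simpa using hanti hx hy hxy
      | succ q ih =>
        intro x hx y hy hxy
        have h1 := ih x hx y hy hxy
        have e : ∀ z, f^[2 * (q + 1) + 1] z = f (f (f^[2 * q + 1] z)) := by
          intro z
          have : 2 * (q + 1) + 1 = (2 * q + 1) + 1 + 1 := by ring
          rw [this, Function.iterate_succ_apply', Function.iterate_succ_apply']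
        rw [e x, e y]
        exact hanti (hmap (hit _ x hx)) (hmap (hit _ y hy))
          (hanti (hit _ y hy) (hit _ x hx) h1)
    have h1 : f^[n] b < f^[n] a := by
      rw [hp]; exact key p a ha b hb hlt
    rw [hper a ha, hper b hb] at h1
    exact absurd hlt (not_lt.mpr h1.le)
end

section
/- Let I ⊆ ℝ be an interval with at least two points and f : I → I continuous with f^n = id for some even n ≥ 2. Then f^2 = id. -/
/-- If `g` is strictly monotone on `I`, maps `I` into itself, and some positive iterate
fixes `x ∈ I`, then `g` fixes `x`. -/
lemma aux_fix (I : Set ℝ) (g : ℝ → ℝ) (hg : StrictMonoOn g I)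
    (hmap : Set.MapsTo g I I) (m : ℕ) (hm : 1 ≤ m) (x : ℝ) (hx : x ∈ I)
    (h : g^[m] x = x) : g x = x := by
  have hiter : ∀ k, g^[k] x ∈ I := by
    intro k
    induction k with
    | zero => simpa using hx
    | succ k ih => rw [Function.iterate_succ_apply']; exact hmap ih
  rcases lt_trichotomy (g x) x with hlt | heq | hgt
  · exfalso
    have key : ∀ k, 1 ≤ k → g^[k] x < x := by
      intro k hk
      induction k with
      | zero => omega
      | succ k ih =>
        rcases Nat.eq_or_lt_of_le hk with h1 | h1
        · simpa [← h1] using hlt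
        · have hk1 : 1 ≤ k := by omega
          have := ih hk1
          have h2 : g (g^[k] x) < g x := hg (hiter k) hx this
          rw [Function.iterate_succ_apply']
          exact h2.trans hlt
    exact absurd h (by have := key m hm; linarith)
  · exact heq
  · exfalso
    have key : ∀ k, 1 ≤ k → x < g^[k] x := by
      intro k hk
      induction k with
      | zero => omega
      | succ k ih =>
        rcases Nat.eq_or_lt_of_le hk with h1 | h1
        · simpa [← h1] using hgt
        · have hk1 : 1 ≤ k := by omega
          have := ih hk1
          have h2 : g x < g (g^[k] x) := hg hx (hiter k) this
          rw [Function.iterate_succ_apply']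
          exact hgt.trans h2
    exact absurd h (by have := key m hm; linarith)

/-- A continuous injective function on a convex subset of `ℝ` with at least two points
is strictly monotone or strictly antitone on it. -/
lemma aux_dicho (I : Set ℝ) (hI : Convex ℝ I) (f : ℝ → ℝ) (hf : ContinuousOn f I)
    (hinj : Set.InjOn f I) (a b : ℝ) (ha : a ∈ I) (hb : b ∈ I) (hab : a < b) :
    StrictMonoOn f I ∨ StrictAntiOn f I := by
  have hIcc : ∀ c d : ℝ, c ∈ I → d ∈ I → Set.Icc c d ⊆ I := fun c d hc hd =>
    hI.ordConnected.out hc hd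
  rcases lt_or_ge (f a) (f b) with hfab | hfab
  · left
    intro x hx y hy hxy
    set c := min a x with hc
    set d := max b y with hd
    have hcI : c ∈ I := by rcases min_choice a x with h | h <;> rw [hc, h] <;> assumption
    have hdI : d ∈ I := by rcases max_choice b y with h | h <;> rw [hd, h] <;> assumption
    have hcd : c ≤ d := le_trans (le_trans (min_le_left a x) hab.le) (le_max_left b y)
    have hsub : Set.Icc c d ⊆ I := hIcc c d hcI hdI
    have haI : a ∈ Set.Icc c d := ⟨min_le_left a x, hab.le.trans (le_max_left b y)⟩
    have hbI : b ∈ Set.Icc c d := ⟨(min_le_left a x).trans hab.le, le_max_left b y⟩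
    have hxI : x ∈ Set.Icc c d :=
      ⟨min_le_right a x, hxy.le.trans (le_max_right b y)⟩
    have hyI : y ∈ Set.Icc c d :=
      ⟨(min_le_right a x).trans hxy.le, le_max_right b y⟩
    rcases ContinuousOn.strictMonoOn_of_injOn_Icc' hcd (hf.mono hsub) (hinj.mono hsub)
      with hmono | hanti
    · exact hmono hxI hyI hxy
    · exact absurd (hanti haI hbI hab) (by linarith)
  · right
    intro x hx y hy hxy
    set c := min a x with hc
    set d := max b y with hd
    have hcI : c ∈ I := by rcases min_choice a x with h | h <;> rw [hc, h] <;> assumption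
    have hdI : d ∈ I := by rcases max_choice b y with h | h <;> rw [hd, h] <;> assumption
    have hcd : c ≤ d := le_trans (le_trans (min_le_left a x) hab.le) (le_max_left b y)
    have hsub : Set.Icc c d ⊆ I := hIcc c d hcI hdI
    have haI : a ∈ Set.Icc c d := ⟨min_le_left a x, hab.le.trans (le_max_left b y)⟩
    have hbI : b ∈ Set.Icc c d := ⟨(min_le_left a x).trans hab.le, le_max_left b y⟩
    have hxI : x ∈ Set.Icc c d :=
      ⟨min_le_right a x, hxy.le.trans (le_max_right b y)⟩
    have hyI : y ∈ Set.Icc c d :=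
      ⟨(min_le_right a x).trans hxy.le, le_max_right b y⟩
    rcases ContinuousOn.strictMonoOn_of_injOn_Icc' hcd (hf.mono hsub) (hinj.mono hsub)
      with hmono | hanti
    · have hne : f a ≠ f b := fun h => hab.ne (hinj ha hb h)
      exact absurd (hmono haI hbI hab) (by rcases lt_or_eq_of_le hfab with h | h
                                           · exact not_lt.mpr h.le
                                           · exact absurd h.symm hne)
    · exact hanti hxI hyI hxy

theorem stmt_7 (I : Set ℝ) (hI : Convex ℝ I) (hI2 : ∃ a ∈ I, ∃ b ∈ I, a ≠ b)
    (f : ℝ → ℝ) (hf : ContinuousOn f I) (hmap : Set.MapsTo f I I)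
    (n : ℕ) (hn : Even n) (hn2 : 2 ≤ n)
    (hper : ∀ x ∈ I, f^[n] x = x) :
    ∀ x ∈ I, f (f x) = x := by
  obtain ⟨a, ha, b, hb, hab⟩ := hI2
  -- injectivity on I
  have hinj : Set.InjOn f I := by
    intro x hx y hy hxy
    have hx' := hper x hx
    have hy' := hper y hy
    obtain ⟨m, hm⟩ : ∃ m, n = m + 1 := ⟨n - 1, by omega⟩
    have heq : f^[n] x = f^[n] y := by
      rw [hm, Function.iterate_succ_apply, Function.iterate_succ_apply, hxy]
    rw [hx', hy'] at heq
    exact heq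
  -- wlog a < b
  have key : ∀ a b : ℝ, a ∈ I → b ∈ I → a < b → ∀ x ∈ I, f (f x) = x := by
    clear hab ha hb a b
    intro a b ha hb hab
    obtain ⟨k, hk⟩ := hn
    have hk1 : 1 ≤ k := by omega
    have hn2k : n = 2 * k := by omega
    rcases aux_dicho I hI f hf hinj a b ha hb hab with hmono | hanti
    · -- f strictly monotone: f = id on I
      intro x hx
      have hfx : f x = x := aux_fix I f hmono hmap n (by omega) x hx (hper x hx)
      rw [hfx, hfx]
    · -- f strictly antitone: f ∘ f strictly monotone
      intro x hx
      set g : ℝ → ℝ := f ∘ f with hg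
      have hgmono : StrictMonoOn g I := by
        intro u hu v hv huv
        exact hanti (hmap hv) (hmap hu) (hanti hu hv huv)
      have hgmap : Set.MapsTo g I I := fun u hu => hmap (hmap hu)
      have hgiter : g^[k] x = x := by
        have h2 : f^[2] = g := by
          funext z; simp [hg]
        have : f^[n] = g^[k] := by rw [hn2k, Function.iterate_mul, h2]
        rw [← this]
        exact hper x hx
      have := aux_fix I g hgmono hgmap k hk1 x hx hgiter
      simpa [hg] using this
  rcases lt_or_gt_of_ne hab with h | h
  · exact key a b ha hb h
  · exact key b a hb ha h
end

section
/- Every continuous involution f : ℝ → ℝ (f ∘ f = id, f ≠ id) is topologically conjugate to x ↦ -x; that is, there exists a homeomorphism φ : ℝ → ℝ with φ ∘ f = (-id) ∘ φ. -/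
theorem stmt_10 (f : ℝ → ℝ) (hf : Continuous f)
    (hinv : f ∘ f = id) (hne : f ≠ id) :
    ∃ φ : ℝ ≃ₜ ℝ, ∀ x : ℝ, φ (f x) = - φ x := by
  have hff : ∀ x, f (f x) = x := fun x => congrFun hinv x
  have hinj : Function.Injective f := fun a b h => by
    have := hff a; rw [h, hff] at this; exact this.symm
  have hanti : StrictAnti f := by
    rcases hf.strictMono_of_inj hinj with hm | ha
    · exfalso; apply hne; funext x
      rcases lt_trichotomy (f x) x with h | h | h
      · have := hm h; rw [hff] at this; exact absurd (this.trans h) (lt_irrefl _)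
      · exact h
      · have := hm h; rw [hff] at this; exact absurd (h.trans this) (lt_irrefl _)
    · exact ha
  set g : ℝ → ℝ := fun x => x - f x with hg
  have hgc : Continuous g := continuous_id.sub hf
  have hgm : StrictMono g := fun a b hab =>
    sub_lt_sub hab (hanti hab)
  have htop : Filter.Tendsto g Filter.atTop Filter.atTop := by
    apply Filter.tendsto_atTop_mono' _ _ (Filter.tendsto_atTop_add_const_right _ (-f 0) Filter.tendsto_id)
    filter_upwards [Filter.eventually_ge_atTop (0 : ℝ)] with x hx
    have : f x ≤ f 0 := hanti.antitone hx
    simp only [hg, id]; linarith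
  have hbot : Filter.Tendsto g Filter.atBot Filter.atBot := by
    apply Filter.tendsto_atBot_mono' _ _ (Filter.tendsto_atBot_add_const_right _ (-f 0) Filter.tendsto_id)
    filter_upwards [Filter.eventually_le_atBot (0 : ℝ)] with x hx
    have : f 0 ≤ f x := hanti.antitone hx
    simp only [hg, id]; linarith
  have hsurj : Function.Surjective g := hgc.surjective htop hbot
  refine ⟨(hgm.orderIsoOfSurjective g hsurj).toHomeomorph, fun x => ?_⟩
  show g (f x) = - g x
  simp only [hg]
  rw [hff]
  ring
end

section
/- Let I ⊆ ℝ be an interval with at least two points and f : I → I differentiable with f ∘ f = f. Then f is constant or f = id. -/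
open Set Filter Topology

lemma core_11 (I : Set ℝ) (hI : Convex ℝ I)
    (f : ℝ → ℝ) (hf : ∀ x ∈ I, DifferentiableWithinAt ℝ f I x)
    (hmap : Set.MapsTo f I I) (hid : ∀ x ∈ I, f (f x) = f x)
    (hnc : ∃ a ∈ I, ∃ b ∈ I, f a ≠ f b)
    (x₀ : ℝ) (hx₀ : x₀ ∈ I) (hlt : f x₀ < x₀) : False := by
  obtain ⟨a, ha, b, hb, hab⟩ := hnc
  have hcont : ContinuousOn f I := fun x hx => (hf x hx).continuousWithinAt
  set E : Set ℝ := f '' I with hE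
  have hEI : E ⊆ I := hmap.image_subset
  have hEfix : ∀ y ∈ E, f y = y := by
    rintro y ⟨x, hx, rfl⟩; exact hid x hx
  have hfixE : ∀ y ∈ I, f y = y → y ∈ E := fun y hy h => ⟨y, hy, h⟩
  have hEoc : E.OrdConnected :=
    (hI.isPreconnected.image f hcont).ordConnected
  -- every point of E is < x₀
  have hp : f x₀ ∈ E := ⟨x₀, hx₀, rfl⟩
  have hElt : ∀ y ∈ E, y < x₀ := by
    intro y hy
    rcases lt_trichotomy y x₀ with h | h | h
    · exact h
    · exact absurd (hEfix y hy) (h ▸ hlt.ne)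
    · have : x₀ ∈ E := hEoc.out hp hy ⟨hlt.le, h.le⟩
      exact absurd (hEfix _ this) hlt.ne
  have hEne : E.Nonempty := ⟨f x₀, hp⟩
  have hEbdd : BddAbove E := ⟨x₀, fun y hy => (hElt y hy).le⟩
  set β := sSup E with hβ
  have hlub : IsLUB E β := Real.isLUB_sSup hEne hEbdd
  have hpβ : f x₀ ≤ β := hlub.1 hp
  have hβx₀ : β ≤ x₀ := hlub.2 (fun y hy => (hElt y hy).le)
  have hβmem : β ∈ I := hI.ordConnected.out (hEI hp) hx₀ ⟨hpβ, hβx₀⟩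
  -- f β = β
  have hfβ : f β = β := by
    have hcl : β ∈ closure E := hlub.mem_closure hEne
    have hne : (𝓝[E] β).NeBot := mem_closure_iff_nhdsWithin_neBot.mp hcl
    have h1 : Tendsto f (𝓝[E] β) (𝓝 (f β)) :=
      (hcont β hβmem).tendsto.mono_left (nhdsWithin_mono β hEI)
    have h2 : Tendsto f (𝓝[E] β) (𝓝 β) := by
      have h0 : Tendsto (fun y : ℝ => y) (𝓝[E] β) (𝓝 β) :=
        tendsto_id.mono_left nhdsWithin_le_nhds
      exact h0.congr' (eventually_nhdsWithin_of_forall (fun y hy => (hEfix y hy).symm))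
    exact tendsto_nhds_unique h1 h2
  have hβE : β ∈ E := hfixE β hβmem hfβ
  have hβlt : β < x₀ := hElt β hβE
  -- a nondegenerate fixed interval ending at β
  set u := min (f a) (f b) with hu
  have huE : u ∈ E := by
    rcases min_choice (f a) (f b) with h | h <;> rw [hu, h]
    exacts [⟨a, ha, rfl⟩, ⟨b, hb, rfl⟩]
  have huβ : u < β := by
    have h1 : f a ≤ β := hlub.1 ⟨a, ha, rfl⟩
    have h2 : f b ≤ β := hlub.1 ⟨b, hb, rfl⟩
    rcases hab.lt_or_gt with h | h
    · calc u ≤ f a := min_le_left _ _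
        _ < f b := h
        _ ≤ β := h2
    · calc u ≤ f b := min_le_right _ _
        _ < f a := h
        _ ≤ β := h1
  have hIcc : Icc u β ⊆ E := fun y hy => hEoc.out huE hβE hy
  have hIccI : Icc u β ⊆ I := fun y hy => hEI (hIcc hy)
  -- derivative
  set d := derivWithin f I β with hd
  have hder : HasDerivWithinAt f d I β := (hf β hβmem).hasDerivWithinAt
  have hd1 : d = 1 := by
    have h1 : HasDerivWithinAt f d (Icc u β) β := hder.mono hIccI
    have h2 : HasDerivWithinAt (fun y => y) d (Icc u β) β :=
      h1.congr (fun y hy => (hEfix y (hIcc hy)).symm) hfβ.symm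
    have h3 : HasDerivWithinAt (fun y : ℝ => y) 1 (Icc u β) β := hasDerivWithinAt_id β _
    have hU : UniqueDiffWithinAt ℝ (Icc u β) β := uniqueDiffOn_Icc huβ β (by simp [huβ.le])
    rw [← h2.derivWithin hU, ← h3.derivWithin hU]
  have hd0 : d ≤ 0 := by
    have hsub : Ioo β x₀ ⊆ I := fun y hy =>
      hI.ordConnected.out hβmem hx₀ ⟨hy.1.le, hy.2.le⟩
    have h1 : HasDerivWithinAt f d (Ioo β x₀) β := hder.mono hsub
    have hslope : Tendsto (slope f β) (𝓝[(Ioo β x₀) \ {β}] β) (𝓝 d) :=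
      hasDerivWithinAt_iff_tendsto_slope.mp h1
    have hne : (𝓝[(Ioo β x₀) \ {β}] β).NeBot := by
      apply mem_closure_iff_nhdsWithin_neBot.mp
      have : (Ioo β x₀) \ {β} = Ioo β x₀ := by
        apply diff_singleton_eq_self; simp
      rw [this, closure_Ioo hβlt.ne]
      exact ⟨le_refl β, hβlt.le⟩
    refine le_of_tendsto hslope (eventually_nhdsWithin_of_forall ?_)
    rintro y ⟨hy, -⟩
    have hyI : y ∈ I := hsub hy
    have hfy : f y ≤ β := hlub.1 ⟨y, hyI, rfl⟩
    have : slope f β y = (f y - f β) / (y - β) := by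
      simp [slope_def_field]
    rw [this, hfβ]
    apply div_nonpos_of_nonpos_of_nonneg <;> linarith [hy.1]
  linarith

theorem stmt_11 (I : Set ℝ) (hI : Convex ℝ I) (hI2 : ∃ a ∈ I, ∃ b ∈ I, a ≠ b)
    (f : ℝ → ℝ) (hf : ∀ x ∈ I, DifferentiableWithinAt ℝ f I x)
    (hmap : Set.MapsTo f I I) (hid : ∀ x ∈ I, f (f x) = f x) :
    (∃ c, ∀ x ∈ I, f x = c) ∨ (∀ x ∈ I, f x = x) := by
  by_contra hcon
  push_neg at hcon
  obtain ⟨h1, x₀, hx₀, hx₀ne⟩ := hcon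
  have hnc : ∃ a ∈ I, ∃ b ∈ I, f a ≠ f b := by
    obtain ⟨a, haI, -⟩ := hI2
    obtain ⟨b, hbI, hb⟩ := h1 (f a)
    exact ⟨b, hbI, a, haI, hb⟩
  rcases hx₀ne.lt_or_gt with h | h
  · exact core_11 I hI f hf hmap hid hnc x₀ hx₀ h
  · -- mirror
    set g : ℝ → ℝ := fun y => -f (-y) with hg
    have hmemneg : ∀ {x : ℝ}, x ∈ -I ↔ -x ∈ I := fun {x} => Set.mem_neg
    have hnegmem : ∀ {x : ℝ}, x ∈ I → -x ∈ -I := fun {x} hx => by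
      rw [hmemneg]; simpa using hx
    refine core_11 (-I) hI.neg g ?_ ?_ ?_ ?_ (-x₀) (hnegmem hx₀) (by simp [hg]; linarith)
    · intro x hx
      have hxI : -x ∈ I := hmemneg.mp hx
      have hneg : DifferentiableWithinAt ℝ (fun y : ℝ => -y) (-I) x :=
        (differentiable_id.neg _).differentiableWithinAt
      have hmn : Set.MapsTo (fun y : ℝ => -y) (-I) I := fun y hy => hmemneg.mp hy
      exact ((hf (-x) hxI).comp x hneg hmn).neg
    · intro y hy
      have : f (-y) ∈ I := hmap (hmemneg.mp hy)
      rw [hmemneg]; simpa [hg] using this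
    · intro x hx
      have hxI : -x ∈ I := hmemneg.mp hx
      simp only [hg, neg_neg]
      rw [hid (-x) hxI]
    · obtain ⟨a, ha, b, hb, hab⟩ := hnc
      exact ⟨-a, hnegmem ha, -b, hnegmem hb, by simpa [hg] using hab⟩
end

section
/- Let I ⊆ ℝ be an interval with at least two points and f : I → I differentiable with f^3 = f. Then f is constant, f = id, or f is an involution (f^2 = id). -/
open Set Filter Topology

lemma aux_lt (I : Set ℝ) (hI : Convex ℝ I) (g : ℝ → ℝ)
    (hg : ∀ x ∈ I, DifferentiableWithinAt ℝ g I x)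
    (J : Set ℝ) (hJI : J ⊆ I) (hJd : UniqueDiffOn ℝ J)
    (hmapJ : ∀ x ∈ I, g x ∈ J)
    (hidJ : ∀ y ∈ J, g y = y)
    (x : ℝ) (hx : x ∈ I) (hlt : g x < x) : False := by
  have hIc : ContinuousOn g I := fun t ht => (hg t ht).continuousWithinAt
  set c := g x with hc
  have hcJ : c ∈ J := hmapJ x hx
  have hcI : c ∈ I := hJI hcJ
  have hcfix : g c = c := hidJ c hcJ
  have hIcc : Set.Icc c x ⊆ I := hI.ordConnected.out hcI hx
  set S := {t | t ∈ Set.Icc c x ∧ g t = t} with hS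
  have hSne : c ∈ S := ⟨⟨le_refl c, hlt.le⟩, hcfix⟩
  have hSsub : S ⊆ Set.Icc c x := fun t ht => ht.1
  have hScl : IsClosed S := by
    have : S = Set.Icc c x ∩ (fun t => g t - t) ⁻¹' {0} := by
      ext t; simp [hS, sub_eq_zero, and_comm]
    rw [this]
    exact ContinuousOn.preimage_isClosed_of_isClosed
      ((hIc.mono hIcc).sub (continuousOn_id)) isClosed_Icc isClosed_singleton
  have hScomp : IsCompact S := isCompact_Icc.of_isClosed_subset hScl hSsub
  set b := sSup S with hbdef
  have hbS : b ∈ S := hScomp.sSup_mem ⟨c, hSne⟩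
  have hbdd : BddAbove S := ⟨x, fun t ht => ht.1.2⟩
  have hbI : b ∈ I := hIcc hbS.1
  have hbx : b < x := lt_of_le_of_ne hbS.1.2 (fun h => (h ▸ hlt.ne) (h ▸ hbS.2))
  have hbJ : b ∈ J := hbS.2 ▸ hmapJ b hbI
  -- no fixed point of g strictly above b and ≤ x
  have hnofix : ∀ t, b < t → t ≤ x → g t ≠ t := by
    intro t hbt htx hfix
    have : t ∈ S := ⟨⟨le_trans hbS.1.1 hbt.le, htx⟩, hfix⟩
    exact absurd (le_csSup hbdd this) (not_le.mpr hbt)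
  -- g t < t on Ioc b x
  have h1 : ∀ t ∈ Set.Ioc b x, g t < t := by
    intro t ht
    by_contra hge
    push_neg at hge
    have htx : Set.Icc t x ⊆ I := fun s hs =>
      hIcc ⟨le_trans hbS.1.1 (le_trans ht.1.le hs.1), hs.2⟩
    have hiv := intermediate_value_Icc' ht.2 (((hIc.mono htx).sub continuousOn_id))
    have h0 : (0 : ℝ) ∈ Set.Icc (g x - x) (g t - t) := ⟨by linarith, by linarith⟩
    obtain ⟨s, hs, hs0⟩ := hiv h0
    have : g s = s := by simpa [sub_eq_zero] using hs0
    exact hnofix s (lt_of_lt_of_le ht.1 hs.1) hs.2 this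
  -- g t ≤ b on Ioc b x
  have h2 : ∀ t ∈ Set.Ioc b x, g t ≤ b := by
    intro t ht
    by_contra hgt
    push_neg at hgt
    have hgtI : g t ∈ J := hmapJ t (hIcc ⟨le_trans hbS.1.1 ht.1.le, ht.2⟩)
    exact hnofix (g t) hgt (le_trans (h1 t ht).le ht.2) (hidJ _ hgtI)
  -- derivative at b
  set d := derivWithin g I b with hd
  have hdI : HasDerivWithinAt g d I b := (hg b hbI).hasDerivWithinAt
  have hd1 : d = 1 := by
    have hdJ : HasDerivWithinAt g d J b := hdI.mono hJI
    have h1' : HasDerivWithinAt g 1 J b :=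
      (hasDerivWithinAt_id b J).congr (fun y hy => hidJ y hy) (hidJ b hbJ)
    have e1 := hdJ.derivWithin (hJd b hbJ)
    have e2 := h1'.derivWithin (hJd b hbJ)
    rw [← e1, ← e2]
  have hd0 : d ≤ 0 := by
    have hslope : Tendsto (slope g b) (𝓝[I \ {b}] b) (𝓝 d) :=
      hasDerivWithinAt_iff_tendsto_slope.mp hdI
    have hsub : Set.Ioc b x ⊆ I \ {b} := fun t ht =>
      ⟨hIcc ⟨le_trans hbS.1.1 ht.1.le, ht.2⟩, ne_of_gt ht.1⟩
    have htend : Tendsto (slope g b) (𝓝[Set.Ioc b x] b) (𝓝 d) :=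
      hslope.mono_left (nhdsWithin_mono b hsub)
    have hne : (𝓝[Set.Ioc b x] b).NeBot := by
      apply mem_closure_iff_nhdsWithin_neBot.mp
      rw [closure_Ioc hbx.ne]
      exact ⟨le_refl b, hbx.le⟩
    exact le_of_tendsto htend (eventually_nhdsWithin_of_forall (fun t ht => by
      rw [slope_def_field]
      apply div_nonpos_of_nonpos_of_nonneg
      · have := h2 t ht; rw [hbS.2]; linarith
      · linarith [ht.1]))
  linarith

lemma aux_main (I : Set ℝ) (hI : Convex ℝ I) (g : ℝ → ℝ)
    (hg : ∀ x ∈ I, DifferentiableWithinAt ℝ g I x)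
    (J : Set ℝ) (hJI : J ⊆ I) (hJconv : Convex ℝ J) (hJint : (interior J).Nonempty)
    (hmapJ : ∀ x ∈ I, g x ∈ J)
    (hidJ : ∀ y ∈ J, g y = y) :
    ∀ x ∈ I, g x = x := by
  intro x hx
  by_contra hne
  rcases lt_or_gt_of_ne hne with hlt | hgt
  · exact aux_lt I hI g hg J hJI (uniqueDiffOn_convex hJconv hJint) hmapJ hidJ x hx hlt
  · -- reflect
    have hmapneg : Set.MapsTo (fun t : ℝ => -t) (-I) I := fun t ht => by
      simpa using ht
    have hg' : ∀ t ∈ -I, DifferentiableWithinAt ℝ (fun t => -g (-t)) (-I) t := by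
      intro t ht
      have h1 : DifferentiableWithinAt ℝ (fun s : ℝ => -s) (-I) t :=
        (differentiable_neg.differentiableAt).differentiableWithinAt
      have h2 : DifferentiableWithinAt ℝ g I (-t) := hg (-t) (by simpa using ht)
      exact (h2.comp t h1 hmapneg).neg
    have hJI' : -J ⊆ -I := fun t ht => by
      simp only [Set.mem_neg] at *; exact hJI ht
    have hJd' : UniqueDiffOn ℝ (-J) := by
      apply uniqueDiffOn_convex hJconv.neg
      obtain ⟨p, hp⟩ := hJint
      have hopen : IsOpen (-interior J) := isOpen_interior.preimage continuous_neg
      refine ⟨-p, interior_maximal (fun t ht => ?_) hopen (by simpa using hp)⟩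
      simp only [Set.mem_neg] at *
      exact interior_subset ht
    have hmapJ' : ∀ t ∈ -I, (fun t => -g (-t)) t ∈ -J := by
      intro t ht
      simp only [Set.mem_neg, neg_neg]
      exact hmapJ (-t) (by simpa using ht)
    have hidJ' : ∀ y ∈ -J, (fun t => -g (-t)) y = y := by
      intro y hy
      simp only [Set.mem_neg] at hy
      simp [hidJ (-y) hy]
    exact aux_lt (-I) hI.neg (fun t => -g (-t)) hg' (-J) hJI' hJd' hmapJ' hidJ'
      (-x) (by simpa using hx) (by simpa using hgt)

theorem stmt_12 (I : Set ℝ) (hI : Convex ℝ I) (hI2 : ∃ a ∈ I, ∃ b ∈ I, a ≠ b)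
    (f : ℝ → ℝ) (hf : ∀ x ∈ I, DifferentiableWithinAt ℝ f I x)
    (hmap : Set.MapsTo f I I) (hid : ∀ x ∈ I, f^[3] x = f x) :
    (∃ c, ∀ x ∈ I, f x = c) ∨ (∀ x ∈ I, f x = x) ∨ (∀ x ∈ I, f (f x) = x) := by
  obtain ⟨a, ha, b, hb, hab⟩ := hI2
  set J := f '' I with hJ
  have hcont : ContinuousOn f I := fun t ht => (hf t ht).continuousWithinAt
  have hJI : J ⊆ I := Set.image_subset_iff.mpr (fun x hx => hmap hx)
  have hinv : ∀ y ∈ J, f (f y) = y := by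
    rintro y ⟨x, hx, rfl⟩
    have h3 : f (f (f x)) = f x := by
      have := hid x hx
      simpa [Function.iterate_succ_apply'] using this
    exact h3
  by_cases hsing : ∃ p ∈ J, ∃ q ∈ J, p ≠ q
  · right; right
    obtain ⟨p, hp, q, hq, hpq⟩ := hsing
    have hJconv : Convex ℝ J :=
      ((hI.isPreconnected.image f hcont).ordConnected).convex
    have hJint : (interior J).Nonempty := by
      rcases hpq.lt_or_gt with h | h
      · refine ⟨(p + q) / 2, interior_maximal (fun t ht => ?_) isOpen_Ioo
          (show (p+q)/2 ∈ Set.Ioo p q from ⟨by linarith, by linarith⟩)⟩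
        exact hJconv.ordConnected.out hp hq ⟨ht.1.le, ht.2.le⟩
      · refine ⟨(q + p) / 2, interior_maximal (fun t ht => ?_) isOpen_Ioo
          (show (q+p)/2 ∈ Set.Ioo q p from ⟨by linarith, by linarith⟩)⟩
        exact hJconv.ordConnected.out hq hp ⟨ht.1.le, ht.2.le⟩
    have hg : ∀ x ∈ I, DifferentiableWithinAt ℝ (fun x => f (f x)) I x := by
      intro x hx
      exact (hf (f x) (hmap hx)).comp x (hf x hx) hmap
    have hmapJ : ∀ x ∈ I, f (f x) ∈ J := fun x hx => ⟨f x, hmap hx, rfl⟩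
    exact aux_main I hI (fun x => f (f x)) hg J hJI hJconv hJint hmapJ hinv
  · push_neg at hsing
    left
    exact ⟨f a, fun x hx => hsing (f x) ⟨x, hx, rfl⟩ (f a) ⟨a, ha, rfl⟩⟩
end

section
/- Let n > k ≥ 0 with n - k odd, I ⊆ ℝ an interval, and f : I → I continuous. Then f^n = f^k if and only if f^{k+1} = f^k. -/
open Function Set

/-- A continuous periodic map of odd period on an ord-connected subset of ℝ is the identity. -/
lemma odd_period_id {J : Set ℝ} (hJ : J.OrdConnected) {g : ℝ → ℝ}
    (hg : ContinuousOn g J) (hmapJ : Set.MapsTo g J J) {m : ℕ} (hm : Odd m)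
    (hper : ∀ x ∈ J, g^[m] x = x) {x : ℝ} (hx : x ∈ J) : g x = x := by
  have hm0 : 0 < m := hm.pos
  -- injectivity on J
  have hinj : Set.InjOn g J := by
    intro a ha b hb hab
    have h1 : a = g^[m] a := (hper a ha).symm
    have h2 : b = g^[m] b := (hper b hb).symm
    rw [h1, h2]
    obtain ⟨m', rfl⟩ := Nat.exists_eq_succ_of_ne_zero hm0.ne'
    rw [Function.iterate_succ_apply, Function.iterate_succ_apply, hab]
  -- iterates stay in J
  have hiterJ : ∀ i, g^[i] x ∈ J := fun i => (hmapJ.iterate i) hx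
  -- periodicity mod m of the orbit
  have hmul : ∀ t, g^[m * t] x = x := by
    intro t
    induction t with
    | zero => simp
    | succ t ih =>
      have : m * (t + 1) = m * t + m := by ring
      rw [this, Function.iterate_add_apply, hper x hx, ih]
  have hmod : ∀ i, g^[i] x = g^[i % m] x := by
    intro i
    conv_lhs => rw [← Nat.mod_add_div i m]
    rw [Function.iterate_add_apply, hmul]
  -- the orbit as a finite set
  set O : Finset ℝ := (Finset.range m).image (fun i => g^[i] x) with hO
  have hOne : O.Nonempty := ⟨g^[0] x, Finset.mem_image.mpr ⟨0, Finset.mem_range.mpr hm0, rfl⟩⟩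
  set a := O.min' hOne
  set b := O.max' hOne
  have hab : a ≤ b := O.min'_le _ (O.max'_mem hOne)
  have hmemIcc : ∀ i, g^[i] x ∈ Set.Icc a b := by
    intro i
    have hiO : g^[i % m] x ∈ O :=
      Finset.mem_image.mpr ⟨i % m, Finset.mem_range.mpr (Nat.mod_lt _ hm0), rfl⟩
    rw [hmod i]
    exact ⟨O.min'_le _ hiO, O.le_max' _ hiO⟩
  have hOJ : ∀ y ∈ O, y ∈ J := by
    intro y hy
    obtain ⟨i, _, rfl⟩ := Finset.mem_image.mp hy
    exact hiterJ i
  have hIccJ : Set.Icc a b ⊆ J := hJ.out (hOJ _ (O.min'_mem hOne)) (hOJ _ (O.max'_mem hOne))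
  by_contra hne
  -- g is strictly monotone or antitone on [a,b]
  rcases ContinuousOn.strictMonoOn_of_injOn_Icc' hab (hg.mono hIccJ) (hinj.mono hIccJ) with
    hmono | hanti
  · -- monotone case: orbit is strictly monotone, contradicting periodicity
    rcases lt_or_gt_of_ne hne with hlt | hgt
    · have key : ∀ i, g^[i + 1] x < x := by
        intro i
        induction i with
        | zero => simpa using hlt
        | succ i ih =>
          have h1 : g (g^[i + 1] x) < g x :=
            hmono (hmemIcc (i + 1)) (by simpa using hmemIcc 0) ih
          rw [Function.iterate_succ_apply']
          calc g (g^[i + 1] x) < g x := h1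
            _ < x := hlt
      have := key (m - 1)
      rw [show m - 1 + 1 = m by omega, hper x hx] at this
      exact lt_irrefl _ this
    · have key : ∀ i, x < g^[i + 1] x := by
        intro i
        induction i with
        | zero => simpa using hgt
        | succ i ih =>
          have h1 : g x < g (g^[i + 1] x) :=
            hmono (by simpa using hmemIcc 0) (hmemIcc (i + 1)) ih
          rw [Function.iterate_succ_apply']
          calc x < g x := hgt
            _ < g (g^[i + 1] x) := h1
      have := key (m - 1)
      rw [show m - 1 + 1 = m by omega, hper x hx] at this
      exact lt_irrefl _ this
  · -- antitone case: parity argument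
    -- choose p q ∈ {0,1} with g^[p] x < g^[q] x
    obtain ⟨p, q, hpq⟩ : ∃ p q : ℕ, g^[p] x < g^[q] x := by
      rcases lt_or_gt_of_ne hne with hlt | hgt
      · exact ⟨1, 0, by simpa using hlt⟩
      · exact ⟨0, 1, by simpa using hgt⟩
    have key : ∀ i, (Even i → g^[i + p] x < g^[i + q] x) ∧
        (Odd i → g^[i + q] x < g^[i + p] x) := by
      intro i
      induction i with
      | zero =>
        refine ⟨fun _ => by simpa using hpq, fun h => absurd h (by simp)⟩
      | succ i ih =>
        constructor
        · intro hev
          have hoi : Odd i := by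
            rw [Nat.odd_iff]; rw [Nat.even_iff] at hev; omega
          have h1 := ih.2 hoi
          have h2 : g (g^[i + p] x) < g (g^[i + q] x) :=
            hanti (hmemIcc (i + q)) (hmemIcc (i + p)) h1
          have e1 : g^[i + 1 + p] x = g (g^[i + p] x) := by
            rw [show i + 1 + p = (i + p) + 1 by ring, Function.iterate_succ_apply']
          have e2 : g^[i + 1 + q] x = g (g^[i + q] x) := by
            rw [show i + 1 + q = (i + q) + 1 by ring, Function.iterate_succ_apply']
          rw [e1, e2]; exact h2
        · intro hod
          have hei : Even i := by
            rw [Nat.even_iff]; rw [Nat.odd_iff] at hod; omega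
          have h1 := ih.1 hei
          have h2 : g (g^[i + q] x) < g (g^[i + p] x) :=
            hanti (hmemIcc (i + p)) (hmemIcc (i + q)) h1
          have e1 : g^[i + 1 + p] x = g (g^[i + p] x) := by
            rw [show i + 1 + p = (i + p) + 1 by ring, Function.iterate_succ_apply']
          have e2 : g^[i + 1 + q] x = g (g^[i + q] x) := by
            rw [show i + 1 + q = (i + q) + 1 by ring, Function.iterate_succ_apply']
          rw [e1, e2]; exact h2
    have hfin := (key m).2 hm
    have ep : g^[m + p] x = g^[p] x := by
      rw [show m + p = p + m by ring, Function.iterate_add_apply, hper x hx]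
    have eq' : g^[m + q] x = g^[q] x := by
      rw [show m + q = q + m by ring, Function.iterate_add_apply, hper x hx]
    rw [ep, eq'] at hfin
    exact absurd hpq (not_lt.mpr hfin.le)

theorem stmt_13 (n k : ℕ) (hkn : k < n) (hodd : Odd (n - k))
    (I : Set ℝ) (hI : Convex ℝ I)
    (f : ℝ → ℝ) (hf : ContinuousOn f I) (hmap : Set.MapsTo f I I) :
    (∀ x ∈ I, f^[n] x = f^[k] x) ↔ (∀ x ∈ I, f^[k + 1] x = f^[k] x) := by
  have hck : ∀ j, ContinuousOn (f^[j]) I := by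
    intro j
    induction j with
    | zero => simpa using continuousOn_id
    | succ j ih =>
      rw [Function.iterate_succ']
      exact hf.comp ih (hmap.iterate j)
  constructor
  · intro h x hx
    set m := n - k with hm
    have hmk : k + m = n := by omega
    set J : Set ℝ := f^[k] '' I with hJdef
    have hJI : J ⊆ I := by
      rintro y ⟨z, hz, rfl⟩
      exact (hmap.iterate k) hz
    have hJord : J.OrdConnected :=
      ((hI.isPreconnected).image _ (hck k)).ordConnected
    have hmapJ : Set.MapsTo f J J := by
      rintro y ⟨z, hz, rfl⟩
      refine ⟨f z, hmap hz, ?_⟩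
      rw [← Function.iterate_succ_apply, Function.iterate_succ_apply']
    have hper : ∀ y ∈ J, f^[m] y = y := by
      rintro y ⟨z, hz, rfl⟩
      rw [← Function.iterate_add_apply, show m + k = n by omega, h z hz]
    have hfix : f (f^[k] x) = f^[k] x :=
      odd_period_id hJord (hf.mono hJI) hmapJ hodd hper ⟨x, hx, rfl⟩
    rw [Function.iterate_succ_apply', hfix]
  · intro h x hx
    have gen : ∀ j, ∀ x ∈ I, f^[k + j] x = f^[k] x := by
      intro j
      induction j with
      | zero => intro x _; rfl
      | succ j ih =>
        intro x hx
        have e : f^[k + (j + 1)] x = f^[k + j] (f x) := by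
          rw [show k + (j + 1) = (k + j) + 1 by ring, Function.iterate_succ_apply]
        rw [e, ih (f x) (hmap hx), ← Function.iterate_succ_apply, h x hx]
    have := gen (n - k) x hx
    rwa [show k + (n - k) = n by omega] at this
end

section
/- Let n > k ≥ 0 with n - k even and positive, I ⊆ ℝ an interval, and f : I → I continuous. Then f^n = f^k if and only if f^{k+2} = f^k. -/
/-- A strictly monotone self-map of a set with a periodic point fixes that point. -/
lemma key_fixed {g : ℝ → ℝ} {S : Set ℝ} (hmono : StrictMonoOn g S)
    (hmaps : Set.MapsTo g S S) {y : ℝ} (hy : y ∈ S) {m : ℕ} (hm : 1 ≤ m)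
    (hper : g^[m] y = y) : g y = y := by
  have hiter : ∀ i, g^[i] y ∈ S := fun i => hmaps.iterate i hy
  rcases lt_trichotomy (g y) y with h | h | h
  · have H : ∀ i, g^[i + 1] y < y := by
      intro i
      induction i with
      | zero => simpa using h
      | succ i ih =>
        have h2 : g (g^[i + 1] y) < g y := hmono (hiter _) hy ih
        have h3 : g^[i + 2] y = g (g^[i + 1] y) := Function.iterate_succ_apply' g (i + 1) y
        rw [h3]
        exact h2.trans h
    have := H (m - 1)
    rw [show m - 1 + 1 = m from by omega, hper] at this
    exact absurd this (lt_irrefl y)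
  · exact h
  · have H : ∀ i, y < g^[i + 1] y := by
      intro i
      induction i with
      | zero => simpa using h
      | succ i ih =>
        have h2 : g y < g (g^[i + 1] y) := hmono hy (hiter _) ih
        have h3 : g^[i + 2] y = g (g^[i + 1] y) := Function.iterate_succ_apply' g (i + 1) y
        rw [h3]
        exact h.trans h2
    have := H (m - 1)
    rw [show m - 1 + 1 = m from by omega, hper] at this
    exact absurd this (lt_irrefl y)

theorem stmt_14 (n k : ℕ) (hkn : k < n) (heven : Even (n - k))
    (I : Set ℝ) (hI : Convex ℝ I)
    (f : ℝ → ℝ) (hf : ContinuousOn f I) (hmap : Set.MapsTo f I I) :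
    (∀ x ∈ I, f^[n] x = f^[k] x) ↔ (∀ x ∈ I, f^[k + 2] x = f^[k] x) := by
  have hIk : ∀ j, Set.MapsTo f^[j] I I := fun j => hmap.iterate j
  constructor
  · intro H x hx
    set m := n - k with hmdef
    have hm1 : 1 ≤ m := by omega
    have hnk : n = m + k := by omega
    set J : Set ℝ := f^[k] '' I with hJdef
    have hJI : J ⊆ I := by rintro _ ⟨z, hz, rfl⟩; exact hIk k hz
    have hmapJ : Set.MapsTo f J J := by
      rintro _ ⟨z, hz, rfl⟩
      refine ⟨f z, hmap hz, ?_⟩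
      rw [← Function.iterate_succ_apply, Function.iterate_succ_apply']
    have hper : ∀ y ∈ J, f^[m] y = y := by
      rintro _ ⟨z, hz, rfl⟩
      rw [← Function.iterate_add_apply, ← hnk]
      exact H z hz
    have hinj : Set.InjOn f J := by
      intro a ha b hb hab
      have h1 : f^[m] a = f^[m] b := by
        rw [show m = m - 1 + 1 from by omega, Function.iterate_succ_apply,
          Function.iterate_succ_apply, hab]
      rwa [hper a ha, hper b hb] at h1
    have hJc : J.OrdConnected := by
      have h1 : IsPreconnected J :=
        (hI.isPreconnected).image _ (hf.iterate hmap k)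
      exact h1.ordConnected
    -- the point and its orbit
    set y : ℝ := f^[k] x with hydef
    have hyJ : y ∈ J := ⟨x, hx, rfl⟩
    have hpy : f^[m] y = y := hper y hyJ
    have hiterJ : ∀ i, f^[i] y ∈ J := fun i => hmapJ.iterate i hyJ
    set T : Finset ℝ := (Finset.range (m + 1)).image (fun i => f^[i] y) with hTdef
    have hTne : T.Nonempty := ⟨y, by
      simp only [hTdef, Finset.mem_image]
      exact ⟨0, Finset.mem_range.mpr (by omega), rfl⟩⟩
    set a : ℝ := T.min' hTne with hadef
    set b : ℝ := T.max' hTne with hbdef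
    have hTJ : (T : Set ℝ) ⊆ J := by
      intro t ht
      simp only [hTdef, Finset.coe_image, Finset.coe_range, Set.mem_image] at ht
      obtain ⟨i, _, rfl⟩ := ht
      exact hiterJ i
    have hab : a ≤ b := T.min'_le _ (T.max'_mem hTne)
    have hIccJ : Set.Icc a b ⊆ J :=
      hJc.out (hTJ (T.min'_mem hTne)) (hTJ (T.max'_mem hTne))
    have hTIcc : (T : Set ℝ) ⊆ Set.Icc a b := fun t ht =>
      ⟨T.min'_le t ht, T.le_max' t ht⟩
    have hyT : y ∈ (T : Set ℝ) := by
      simp only [hTdef, Finset.coe_image, Finset.coe_range, Set.mem_image]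
      exact ⟨0, Set.mem_Iio.mpr (by omega), rfl⟩
    have hmapT : Set.MapsTo f (T : Set ℝ) (T : Set ℝ) := by
      intro t ht
      simp only [hTdef, Finset.coe_image, Finset.coe_range, Set.mem_image] at ht ⊢
      obtain ⟨i, hi, rfl⟩ := ht
      simp only [Set.mem_Iio] at hi
      by_cases him : i = m
      · refine ⟨1, Set.mem_Iio.mpr (by omega), ?_⟩
        rw [him, hpy, Function.iterate_one]
      · refine ⟨i + 1, Set.mem_Iio.mpr (by omega), ?_⟩
        rw [Function.iterate_succ_apply']
    -- f is strictly monotone or antitone on [a, b]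
    have hfIcc : ContinuousOn f (Set.Icc a b) := hf.mono (fun t ht => hJI (hIccJ ht))
    have hinjIcc : Set.InjOn f (Set.Icc a b) := hinj.mono hIccJ
    have key2 : f^[2] y = y := by
      rcases ContinuousOn.strictMonoOn_of_injOn_Icc' hab hfIcc hinjIcc with hmono | hanti
      · have hm' : StrictMonoOn f (T : Set ℝ) := hmono.mono hTIcc
        have hfy : f y = y := key_fixed hm' hmapT hyT hm1 hpy
        simp [Function.iterate_succ_apply', hfy]
      · have hg : StrictMonoOn f^[2] (T : Set ℝ) := by
          intro u hu v hv huv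
          have h1 : f v < f u := hanti (hTIcc hu) (hTIcc hv) huv
          have h2 : f (f u) < f (f v) :=
            hanti (hTIcc (hmapT hv)) (hTIcc (hmapT hu)) h1
          simpa [Function.iterate_succ_apply', Function.iterate_one] using h2
        have hmapT2 : Set.MapsTo f^[2] (T : Set ℝ) (T : Set ℝ) := hmapT.iterate 2
        have hper2 : (f^[2])^[m] y = y := by
          rw [← Function.iterate_mul, show 2 * m = m + m from by ring,
            Function.iterate_add_apply, hpy, hpy]
        exact key_fixed hg hmapT2 hyT hm1 hper2
    calc f^[k + 2] x = f^[2 + k] x := by rw [Nat.add_comm]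
      _ = f^[2] (f^[k] x) := Function.iterate_add_apply f 2 k x
      _ = f^[k] x := key2
  · intro H x hx
    obtain ⟨r, hr⟩ := heven
    have hn : n = k + 2 * r := by omega
    have claim : ∀ j, ∀ x ∈ I, f^[k + 2 * j] x = f^[k] x := by
      intro j
      induction j with
      | zero => intro x hx; simp
      | succ j ih =>
        intro x hx
        have he : k + 2 * (j + 1) = 2 + (k + 2 * j) := by ring
        rw [he, Function.iterate_add_apply, ih x hx,
          ← Function.iterate_add_apply, show 2 + k = k + 2 from by ring]
        exact H x hx
    rw [hn]
    exact claim r x hx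
end

section
/- Let f : ℝ → ℝ be analytic with f^n = f^k for some n > k ≥ 0, and suppose f is not periodic (i.e. f^m ≠ id for all m ≥ 1). Then f is constant. -/
open Set

private lemma iter_analytic' (f : ℝ → ℝ) (hf : ∀ x : ℝ, AnalyticAt ℝ f x) :
    ∀ j, ∀ x : ℝ, AnalyticAt ℝ (f^[j]) x := by
  intro j
  induction j with
  | zero => intro x; simpa using (analyticAt_id : AnalyticAt ℝ (id : ℝ → ℝ) x)
  | succ j ih =>
    intro x
    rw [Function.iterate_succ']
    exact (hf _).comp (ih x)

private lemma eq_of_eqOn' (g h : ℝ → ℝ) (hg : ∀ x : ℝ, AnalyticAt ℝ g x)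
    (hh : ∀ x : ℝ, AnalyticAt ℝ h x) {a b : ℝ} (hab : a < b)
    (heq : EqOn g h (Ioo a b)) : g = h := by
  have h1 : AnalyticOnNhd ℝ g univ := fun x _ => hg x
  have h2 : AnalyticOnNhd ℝ h univ := fun x _ => hh x
  have hmem : ((a + b) / 2) ∈ Ioo a b := ⟨by linarith, by linarith⟩
  have hev : g =ᶠ[nhds ((a + b) / 2)] h :=
    Filter.eventuallyEq_of_mem (isOpen_Ioo.mem_nhds hmem) heq
  exact h1.eq_of_eventuallyEq h2 hev

private lemma range_interval' (f : ℝ → ℝ) (hf : Continuous f) {a b : ℝ}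
    (hne : f a ≠ f b) : ∃ u v : ℝ, u < v ∧ Ioo u v ⊆ range f := by
  refine ⟨min (f a) (f b), max (f a) (f b), min_lt_max.mpr hne, ?_⟩
  intro y hy
  have hmem : y ∈ uIcc (f a) (f b) := Ioo_subset_Icc_self hy
  obtain ⟨z, _, hz⟩ := intermediate_value_uIcc (hf.continuousOn) hmem
  exact ⟨z, hz⟩

theorem stmt_15 (f : ℝ → ℝ) (hf : ∀ x : ℝ, AnalyticAt ℝ f x)
    (n k : ℕ) (hkn : k < n) (h : f^[n] = f^[k])
    (hnp : ∀ m : ℕ, 1 ≤ m → f^[m] ≠ id) :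
    ∃ c, f = fun _ => c := by
  by_contra hc
  push_neg at hc
  have hnc : ∃ x, f x ≠ f 0 := by
    by_contra h'
    push_neg at h'
    exact hc (f 0) (funext h')
  obtain ⟨x0, hx0⟩ := hnc
  have hcont : Continuous f := continuous_iff_continuousAt.mpr fun x => (hf x).continuousAt
  have hk1 : 1 ≤ k := by
    rcases Nat.eq_zero_or_pos k with hk | hk
    · subst hk
      simp only [Function.iterate_zero] at h
      exact absurd h (hnp n (by omega))
    · exact hk
  have hiter : ∀ j, ∃ a b, f^[j] a ≠ f^[j] b := by
    intro j
    induction j with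
    | zero => exact ⟨0, 1, by norm_num⟩
    | succ j ih =>
      obtain ⟨a, b, hab⟩ := ih
      by_contra h'
      push_neg at h'
      set c := f^[j + 1] 0 with hcdef
      have hallc : ∀ y, f^[j + 1] y = c := fun y => h' y 0
      obtain ⟨u, v, huv, hsub⟩ := range_interval' f hcont hx0
      have heq : EqOn (f^[j]) (fun _ => c) (Ioo u v) := by
        intro y hy
        obtain ⟨z, rfl⟩ := hsub hy
        have := hallc z
        rwa [Function.iterate_succ_apply] at this
      have hconst := eq_of_eqOn' (f^[j]) (fun _ => c) (iter_analytic' f hf j)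
        (fun x => analyticAt_const) huv heq
      rw [hconst] at hab
      exact hab rfl
  obtain ⟨a, b, hab⟩ := hiter k
  obtain ⟨u, v, huv, hsub⟩ := range_interval' (f^[k]) (hcont.iterate k) hab
  set m := n - k with hmdef
  have hm : 1 ≤ m := by omega
  have hnk : f^[m] ∘ f^[k] = f^[k] := by
    rw [← Function.iterate_add, show m + k = n from by omega]
    exact h
  have heq : EqOn (f^[m]) id (Ioo u v) := by
    intro y hy
    obtain ⟨z, rfl⟩ := hsub hy
    exact congrFun hnk z
  exact hnp m hm (eq_of_eqOn' _ _ (iter_analytic' f hf m)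
    (fun x => by simpa using (analyticAt_id : AnalyticAt ℝ (id : ℝ → ℝ) x)) huv heq)
end

section
/- Every entire (holomorphic on ℂ) injective function f : ℂ → ℂ satisfying f^m = id for some m ≥ 1 is of the form f(z) = az + b with a^m = 1; consequently every nonconstant entire solution of f^n = f^k (n > k ≥ 0) is an affine map z ↦ az + b with a an (n-k)-th root of unity. -/
open Filter Set Metric Polynomial

namespace Stmt16Aux

/-- Identity theorem for entire functions agreeing on a nonempty open set. -/
lemma eq_of_eqOn_open {h₁ h₂ : ℂ → ℂ} (d₁ : Differentiable ℂ h₁) (d₂ : Differentiable ℂ h₂)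
    {s : Set ℂ} (hs : IsOpen s) (hne : s.Nonempty) (he : Set.EqOn h₁ h₂ s) : h₁ = h₂ := by
  obtain ⟨z, hz⟩ := hne
  exact (Complex.analyticOnNhd_univ_iff_differentiable.mpr d₁).eq_of_eventuallyEq
    (Complex.analyticOnNhd_univ_iff_differentiable.mpr d₂)
    (Filter.eventuallyEq_of_mem (hs.mem_nhds hz) he)

/-- Properness of a map with a continuous left inverse. -/
lemma proper {f g : ℂ → ℂ} (hg : Continuous g) (hgf : ∀ z, g (f z) = z) (r : ℝ) :
    ∃ R : ℝ, 0 < R ∧ ∀ z : ℂ, R < ‖z‖ → r < ‖f z‖ := by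
  obtain ⟨R, hR⟩ := ((isCompact_closedBall (0 : ℂ) r).image hg).isBounded.subset_closedBall 0
  refine ⟨max R 1, lt_of_lt_of_le one_pos (le_max_right _ _), fun z hz => ?_⟩
  by_contra h
  push_neg at h
  have hmem : z ∈ g '' closedBall 0 r :=
    ⟨f z, by simpa [mem_closedBall, dist_zero_right] using h, hgf z⟩
  have h2 := hR hmem
  rw [mem_closedBall, dist_zero_right] at h2
  exact absurd (lt_of_le_of_lt (le_max_left R 1) hz) (not_lt.mpr h2)

/-- An entire function with a continuous left inverse has polynomial growth. -/
lemma growth {f g : ℂ → ℂ} (hf : Differentiable ℂ f) (hg : Continuous g)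
    (hgf : ∀ z, g (f z) = z) :
    ∃ (k : ℕ) (C : ℝ) (R₁ : ℝ), 0 < C ∧ 1 ≤ R₁ ∧ ∀ z : ℂ, R₁ ≤ ‖z‖ → ‖f z‖ ≤ C * ‖z‖ ^ k := by
  obtain ⟨R₀, hR₀pos, hR₀⟩ := proper hg hgf 1
  set H : ℂ → ℂ := fun z => if z = 0 then 0 else (f z⁻¹)⁻¹ with hH
  have hsmall : ∀ z : ℂ, z ≠ 0 → ‖z‖ < R₀⁻¹ →
      (1 < ‖f z⁻¹‖ ∧ f z⁻¹ ≠ 0 ∧ H z = (f z⁻¹)⁻¹) := by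
    intro z hz hz2
    have h0 : 0 < ‖z‖ := norm_pos_iff.mpr hz
    have h1 : R₀ < ‖z⁻¹‖ := by
      rw [norm_inv]
      calc R₀ = (R₀⁻¹)⁻¹ := (inv_inv R₀).symm
        _ < ‖z‖⁻¹ := by
          apply inv_strictAnti₀ h0 hz2
    have h2 := hR₀ _ h1
    have h3 : f z⁻¹ ≠ 0 := by
      intro h
      rw [h] at h2
      simp at h2
      linarith
    exact ⟨h2, h3, if_neg hz⟩
  have hdiff : ∀ᶠ z in nhdsWithin (0 : ℂ) {(0 : ℂ)}ᶜ, DifferentiableAt ℂ H z := by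
    have hball : Metric.ball (0 : ℂ) R₀⁻¹ ∈ nhds (0 : ℂ) := ball_mem_nhds _ (by positivity)
    rw [eventually_nhdsWithin_iff]
    filter_upwards [hball] with z hz hz0
    have hz0' : z ≠ 0 := hz0
    have hz' : ‖z‖ < R₀⁻¹ := by simpa [mem_ball, dist_zero_right] using hz
    obtain ⟨h1, h2, h3⟩ := hsmall z hz0' hz'
    have hd : DifferentiableAt ℂ (fun w : ℂ => (f w⁻¹)⁻¹) z := by
      have hd1 : DifferentiableAt ℂ (fun w : ℂ => f w⁻¹) z :=
        (hf _).comp z (differentiableAt_inv hz0')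
      exact hd1.inv h2
    apply hd.congr_of_eventuallyEq
    filter_upwards [isOpen_ne.mem_nhds hz0'] with w hw
    simp only [hH]
    rw [if_neg hw]
  have hcont : ContinuousAt H 0 := by
    have hH0 : H 0 = 0 := if_pos rfl
    rw [ContinuousAt, hH0, NormedAddCommGroup.tendsto_nhds_zero]
    intro ε hε
    obtain ⟨R, hRpos, hR⟩ := proper hg hgf ε⁻¹
    filter_upwards [ball_mem_nhds (0 : ℂ) (show (0 : ℝ) < R⁻¹ by positivity)] with z hz
    rcases eq_or_ne z 0 with rfl | hz0
    · simpa [hH0] using hε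
    · have hz' : ‖z‖ < R⁻¹ := by simpa [mem_ball, dist_zero_right] using hz
      have h1 : R < ‖z⁻¹‖ := by
        rw [norm_inv]
        calc R = (R⁻¹)⁻¹ := (inv_inv R).symm
          _ < ‖z‖⁻¹ := inv_strictAnti₀ (norm_pos_iff.mpr hz0) hz'
      have h2 := hR _ h1
      have h3 : ‖H z‖ = ‖f z⁻¹‖⁻¹ := by
        simp only [hH]
        rw [if_neg hz0, norm_inv]
      rw [h3]
      calc ‖f z⁻¹‖⁻¹ < (ε⁻¹)⁻¹ := inv_strictAnti₀ (by positivity) h2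
        _ = ε := inv_inv ε
  have hfa : AnalyticAt ℂ H 0 :=
    Complex.analyticAt_of_differentiable_on_punctured_nhds_of_continuousAt hdiff hcont
  have hno : ¬ ∀ᶠ z in nhds (0 : ℂ), H z = 0 := by
    intro h
    have h2 : ∀ᶠ z in nhdsWithin (0 : ℂ) {(0 : ℂ)}ᶜ, H z = 0 := h.filter_mono nhdsWithin_le_nhds
    have h3 : ∀ᶠ z in nhdsWithin (0 : ℂ) {(0 : ℂ)}ᶜ, H z ≠ 0 := by
      rw [eventually_nhdsWithin_iff]
      filter_upwards [ball_mem_nhds (0 : ℂ) (show (0 : ℝ) < R₀⁻¹ by positivity)] with z hz hz0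
      obtain ⟨h1, hf0, h3⟩ := hsmall z hz0 (by simpa [mem_ball, dist_zero_right] using hz)
      rw [h3]
      exact inv_ne_zero hf0
    obtain ⟨z, hz1, hz2⟩ := (h2.and h3).exists
    exact hz2 hz1
  obtain ⟨k, G, hGa, hG0, hfac⟩ := hfa.exists_eventuallyEq_pow_smul_nonzero_iff.mpr hno
  have hG0norm : 0 < ‖G 0‖ := norm_pos_iff.mpr hG0
  set c : ℝ := ‖G 0‖ / 2 with hc
  have hcpos : 0 < c := by positivity
  have hGnear : ∀ᶠ z in nhds (0 : ℂ), c < ‖G z‖ := by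
    have hopen : IsOpen {w : ℂ | c < ‖w‖} := isOpen_lt continuous_const continuous_norm
    have hmem : G 0 ∈ {w : ℂ | c < ‖w‖} := by
      simp only [Set.mem_setOf_eq, hc]
      linarith
    have := hGa.continuousAt.preimage_mem_nhds (hopen.mem_nhds hmem)
    filter_upwards [this] with z hz
    exact hz
  have hball : ∀ᶠ z in nhds (0 : ℂ), ‖z‖ < R₀⁻¹ := by
    filter_upwards [ball_mem_nhds (0 : ℂ) (show (0 : ℝ) < R₀⁻¹ by positivity)] with z hz
    simpa [mem_ball, dist_zero_right] using hz
  obtain ⟨δ, hδpos, hδ⟩ := Metric.eventually_nhds_iff.mp ((hfac.and hGnear).and hball)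
  refine ⟨k, c⁻¹, max δ⁻¹ 1 + 1, by positivity, by
    have := le_max_right (δ⁻¹) 1
    linarith, ?_⟩
  intro w hw
  have hw1 : δ⁻¹ < ‖w‖ := by
    have := le_max_left (δ⁻¹) 1
    linarith
  have hwpos : 0 < ‖w‖ := by
    have h := le_max_right (δ⁻¹) 1
    linarith
  have hw0 : w ≠ 0 := norm_pos_iff.mp hwpos
  set z := w⁻¹ with hz
  have hz0 : z ≠ 0 := inv_ne_zero hw0
  have hznorm : ‖z‖ = ‖w‖⁻¹ := norm_inv w
  have hzsmall : ‖z‖ < δ := by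
    rw [hznorm]
    calc ‖w‖⁻¹ < (δ⁻¹)⁻¹ := inv_strictAnti₀ (by positivity) hw1
      _ = δ := inv_inv δ
  have hδz := hδ (by simpa [dist_zero_right] using hzsmall)
  obtain ⟨⟨hfaceq, hGz⟩, hzR₀⟩ := hδz
  obtain ⟨h1, h2, h3⟩ := hsmall z hz0 hzR₀
  have hzw : z⁻¹ = w := inv_inv w
  rw [hzw] at h1 h2 h3
  -- h3 : H z = (f w)⁻¹, hfaceq : H z = (z - 0) ^ k • G z
  have hkey : (f w)⁻¹ = z ^ k * G z := by
    rw [← h3, hfaceq]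
    simp [smul_eq_mul]
  have hnorm : ‖f w‖⁻¹ = ‖z‖ ^ k * ‖G z‖ := by
    rw [← norm_inv, hkey, norm_mul, norm_pow]
  have hGzpos : 0 < ‖G z‖ := lt_trans hcpos hGz
  have hfwpos : 0 < ‖f w‖ := norm_pos_iff.mpr h2
  have hzknonneg : 0 < ‖z‖ ^ k := pow_pos (norm_pos_iff.mpr hz0) k
  have : ‖f w‖ = (‖z‖ ^ k * ‖G z‖)⁻¹ := by
    rw [← hnorm, inv_inv]
  rw [this]
  have hle : ‖z‖ ^ k * c ≤ ‖z‖ ^ k * ‖G z‖ :=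
    mul_le_mul_of_nonneg_left hGz.le hzknonneg.le
  calc (‖z‖ ^ k * ‖G z‖)⁻¹ ≤ (‖z‖ ^ k * c)⁻¹ := by
        apply inv_anti₀ (by positivity) hle
    _ = c⁻¹ * (‖z‖ ^ k)⁻¹ := by rw [mul_comm, mul_inv]
    _ = c⁻¹ * ‖w‖ ^ k := by
        rw [hznorm, ← inv_pow, inv_inv]

/-- An entire function with polynomial growth is a polynomial. -/
lemma poly_of_growth {f : ℂ → ℂ} (hf : Differentiable ℂ f) {k : ℕ} {C R₁ : ℝ}
    (hC : 0 < C) (hR₁ : 1 ≤ R₁) (hgr : ∀ z : ℂ, R₁ ≤ ‖z‖ → ‖f z‖ ≤ C * ‖z‖ ^ k) :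
    ∃ a : ℕ → ℂ, ∀ z, f z = ∑ i ∈ Finset.range (k + 1), a i * z ^ i := by
  set p := cauchyPowerSeries f 0 ((1 : NNReal) : ℝ) with hp
  have hps : HasFPowerSeriesOnBall f p 0 ⊤ := hf.hasFPowerSeriesOnBall 0 one_pos
  have huniq : ∀ R : NNReal, 0 < R → cauchyPowerSeries f 0 (R : ℝ) = p := fun R hR =>
    ((hf.hasFPowerSeriesOnBall 0 hR).hasFPowerSeriesAt).eq_formalMultilinearSeries
      hps.hasFPowerSeriesAt
  have hvan : ∀ n, k < n → p n = 0 := by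
    intro n hn
    have key : ∀ R : ℝ, max R₁ 1 ≤ R → ‖p n‖ ≤ C / R := by
      intro R hRge
      have hR1 : 1 ≤ R := le_trans (le_max_right _ _) hRge
      have hR0 : 0 < R := lt_of_lt_of_le one_pos hR1
      have hRR₁ : R₁ ≤ R := le_trans (le_max_left _ _) hRge
      have hned : cauchyPowerSeries f 0 R = p := by
        have := huniq R.toNNReal (Real.toNNReal_pos.mpr hR0)
        rwa [Real.coe_toNNReal R hR0.le] at this
      have hb := norm_cauchyPowerSeries_le f 0 R n
      rw [hned] at hb
      have hint : (∫ θ in (0 : ℝ)..2 * Real.pi, ‖f (circleMap 0 R θ)‖) ≤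
          2 * Real.pi * (C * R ^ k) := by
        have hbd : ∀ θ ∈ Set.Icc (0 : ℝ) (2 * Real.pi), ‖f (circleMap 0 R θ)‖ ≤ C * R ^ k := by
          intro θ _
          have h1 : ‖circleMap 0 R θ‖ = R := by
            rw [norm_circleMap_zero, abs_of_pos hR0]
          have := hgr (circleMap 0 R θ) (by rw [h1]; exact hRR₁)
          rwa [h1] at this
        calc (∫ θ in (0 : ℝ)..2 * Real.pi, ‖f (circleMap 0 R θ)‖)
            ≤ ∫ _ in (0 : ℝ)..2 * Real.pi, C * R ^ k := by
              apply intervalIntegral.integral_mono_on Real.two_pi_pos.le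
              · exact ((hf.continuous.comp (continuous_circleMap 0 R)).norm).intervalIntegrable _ _
              · exact intervalIntegrable_const
              · exact hbd
          _ = 2 * Real.pi * (C * R ^ k) := by
              rw [intervalIntegral.integral_const, smul_eq_mul, sub_zero]
      have h2 : ‖p n‖ ≤ (2 * Real.pi)⁻¹ * (2 * Real.pi * (C * R ^ k)) * |R|⁻¹ ^ n := by
        refine le_trans hb ?_
        apply mul_le_mul_of_nonneg_right _ (by positivity)
        apply mul_le_mul_of_nonneg_left hint (by positivity)
      have h3 : (2 * Real.pi)⁻¹ * (2 * Real.pi * (C * R ^ k)) = C * R ^ k := by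
        have : (2 : ℝ) * Real.pi ≠ 0 := Real.two_pi_pos.ne'
        field_simp
      rw [h3, abs_of_pos hR0] at h2
      refine le_trans h2 ?_
      have heq : C * R ^ k * R⁻¹ ^ n = C * R ^ k / R ^ n := by
        rw [inv_pow, div_eq_mul_inv]
      rw [heq, div_le_div_iff₀ (by positivity) hR0]
      calc C * R ^ k * R = C * R ^ (k + 1) := by ring
        _ ≤ C * R ^ n := by
            apply mul_le_mul_of_nonneg_left _ hC.le
            exact pow_le_pow_right₀ hR1 hn
    have hlim : Tendsto (fun R : ℝ => C / R) atTop (nhds 0) := by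
      simpa [div_eq_mul_inv] using tendsto_inv_atTop_zero.const_mul C
    have hle : ‖p n‖ ≤ 0 := ge_of_tendsto hlim (eventually_atTop.mpr ⟨max R₁ 1, key⟩)
    exact norm_le_zero_iff.mp hle
  refine ⟨fun i => p.coeff i, fun z => ?_⟩
  have hsum : HasSum (fun n : ℕ => p n fun _ => z) (f z) := by
    have := hps.hasSum_sub (y := z) (EMetric.mem_ball.mpr (edist_lt_top z 0))
    simpa using this
  have hsum2 : HasSum (fun n : ℕ => p n fun _ => z)
      (∑ i ∈ Finset.range (k + 1), p i fun _ => z) := by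
    apply hasSum_sum_of_ne_finset_zero
    intro n hn
    have hkn : k < n := by simp only [Finset.mem_range] at hn; omega
    rw [hvan n hkn]
    simp
  rw [hsum.unique hsum2]
  apply Finset.sum_congr rfl
  intro i _
  rw [FormalMultilinearSeries.apply_eq_pow_smul_coeff, smul_eq_mul, mul_comm]

/-- An entire function equal to a polynomial with nonvanishing derivative is affine. -/
lemma affine_of_poly {f : ℂ → ℂ} (hf : Differentiable ℂ f) (hderiv : ∀ z, deriv f z ≠ 0)
    {k : ℕ} {a : ℕ → ℂ} (hrep : ∀ z, f z = ∑ i ∈ Finset.range (k + 1), a i * z ^ i) :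
    ∃ a₀ b : ℂ, ∀ z, f z = a₀ * z + b := by
  set q : Polynomial ℂ := ∑ i ∈ Finset.range (k + 1), Polynomial.C (a i) * Polynomial.X ^ i
    with hq
  have hfq : f = fun z => q.eval z := by
    funext z
    rw [hrep z, hq]
    simp [Polynomial.eval_finset_sum]
  have hder : ∀ z, q.derivative.eval z = deriv f z := by
    intro z
    rw [hfq]
    exact (Polynomial.deriv (p := q)).symm
  have hd0 : q.derivative.degree ≤ 0 := by
    by_contra h
    push_neg at h
    obtain ⟨z, hz⟩ := Complex.exists_root h
    exact hderiv z (by rw [← hder z]; exact hz)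
  have hqc : q.derivative = Polynomial.C (q.derivative.coeff 0) :=
    Polynomial.eq_C_of_degree_le_zero hd0
  set c : ℂ := q.derivative.coeff 0 with hc
  have hderc : ∀ z, deriv f z = c := by
    intro z
    rw [← hder z, hqc]
    simp
  set F : ℂ → ℂ := fun z => f z - c * z with hF
  have hFd : Differentiable ℂ F := hf.sub (differentiable_id.const_mul c)
  have hF0 : ∀ z, deriv F z = 0 := by
    intro z
    have h1 : deriv F z = deriv f z - deriv (fun w : ℂ => c * w) z :=
      deriv_sub (hf z) ((differentiable_id.const_mul c) z)
    have h2 : deriv (fun w : ℂ => c * w) z = c := by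
      simpa using deriv_const_mul c (differentiableAt_id' (x := z))
    rw [h1, hderc z, h2, sub_self]
  refine ⟨c, f 0, fun z => ?_⟩
  have h3 := is_const_of_deriv_eq_zero hFd hF0 z 0
  have h4 : f z - c * z = f 0 - c * 0 := h3
  linear_combination h4

/-- The key lemma: an entire function with `f^[m] = id`, `m ≥ 1`, is affine. -/
lemma key {f : ℂ → ℂ} (hf : Differentiable ℂ f) {m : ℕ} (hm : 1 ≤ m) (hid : f^[m] = id) :
    ∃ a b : ℂ, ∀ z, f z = a * z + b := by
  obtain ⟨m', rfl⟩ : ∃ m', m = m' + 1 := ⟨m - 1, by omega⟩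
  set g := f^[m'] with hg
  have hgd : Differentiable ℂ g := hf.iterate m'
  have hgf : ∀ z, g (f z) = z := by
    intro z
    have := congrFun hid z
    rwa [Function.iterate_succ_apply] at this
  have hderiv : ∀ z, deriv f z ≠ 0 := by
    intro z hz
    have hcomp : (fun w => g (f w)) = id := funext hgf
    have h1 : deriv (fun w => g (f w)) z = deriv g (f z) * deriv f z :=
      deriv_comp z (hgd _) (hf _)
    rw [hcomp, deriv_id, hz, mul_zero] at h1
    exact one_ne_zero h1
  obtain ⟨k, C, R₁, hC, hR₁, hgr⟩ := growth hf hgd.continuous hgf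
  obtain ⟨a, ha⟩ := poly_of_growth hf hC hR₁ hgr
  exact affine_of_poly hf hderiv ha

/-- Part 1 of the statement. -/
lemma main1 (f : ℂ → ℂ) (hf : Differentiable ℂ f) (m : ℕ) (hm : 1 ≤ m) (hid : f^[m] = id) :
    ∃ a b : ℂ, a ^ m = 1 ∧ ∀ z, f z = a * z + b := by
  obtain ⟨a, b, hab⟩ := key hf hm hid
  have hiter : ∀ i : ℕ, ∃ c : ℂ, ∀ z, f^[i] z = a ^ i * z + c := by
    intro i
    induction i with
    | zero => exact ⟨0, by simp⟩
    | succ i ih =>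
      obtain ⟨c, hc⟩ := ih
      refine ⟨a ^ i * b + c, fun z => ?_⟩
      rw [Function.iterate_succ_apply, hc, hab]
      ring
  obtain ⟨c, hc⟩ := hiter m
  have h0 := hc 0
  have h1 := hc 1
  rw [hid] at h0 h1
  simp only [id_eq, mul_zero, zero_add, mul_one] at h0 h1
  refine ⟨a, b, ?_, hab⟩
  have hc0 : c = 0 := h0.symm
  rw [hc0, add_zero] at h1
  exact h1.symm

end Stmt16Aux

theorem stmt_16 :
    (∀ f : ℂ → ℂ, Differentiable ℂ f → Function.Injective f →
      ∀ m : ℕ, 1 ≤ m → f^[m] = id →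
        ∃ a b : ℂ, a ^ m = 1 ∧ ∀ z, f z = a * z + b) ∧
    (∀ f : ℂ → ℂ, Differentiable ℂ f → (¬ ∃ c, f = fun _ => c) →
      ∀ n k : ℕ, k < n → f^[n] = f^[k] →
        ∃ a b : ℂ, a ^ (n - k) = 1 ∧ ∀ z, f z = a * z + b) := by
  constructor
  · intro f hf _ m hm hid
    exact Stmt16Aux.main1 f hf m hm hid
  · intro f hf hnc n k hkn hiter
    have hm : 1 ≤ n - k := by omega
    have hidm : f^[n - k] = id := by
      rcases Nat.eq_zero_or_pos k with rfl | hk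
      · simpa using hiter
      · have hnc' : ∀ j : ℕ, ¬ ∃ c : ℂ, ∀ z, f^[j + 1] z = c := by
          intro j
          induction j with
          | zero =>
            rintro ⟨c, hcz⟩
            exact hnc ⟨c, funext fun z => by simpa using hcz z⟩
          | succ j ih =>
            rintro ⟨c, hcz⟩
            have hfopen : IsOpen (Set.range f) := by
              rcases (Complex.analyticOnNhd_univ_iff_differentiable.mpr hf).is_constant_or_isOpen
                  isPreconnected_univ with ⟨w, hw⟩ | hop
              · exact absurd ⟨w, funext fun z => hw z (Set.mem_univ z)⟩ hnc
              · simpa [Set.image_univ] using hop Set.univ (subset_refl _) isOpen_univ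
            have heq : f^[j + 1] = fun _ => c := by
              apply Stmt16Aux.eq_of_eqOn_open (hf.iterate _) (differentiable_const c) hfopen
                ⟨f 0, Set.mem_range_self 0⟩
              rintro x ⟨z, rfl⟩
              have := hcz z
              rwa [Function.iterate_succ_apply] at this
            exact ih ⟨c, fun z => congrFun heq z⟩
        have hkk : k = (k - 1) + 1 := by omega
        have hSopen : IsOpen (Set.range f^[k]) := by
          rcases (Complex.analyticOnNhd_univ_iff_differentiable.mpr (hf.iterate k)).is_constant_or_isOpen
              isPreconnected_univ with ⟨w, hw⟩ | hop
          · refine absurd ?_ (hnc' (k - 1))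
            exact ⟨w, fun z => by rw [← hkk]; exact hw z (Set.mem_univ z)⟩
          · simpa [Set.image_univ] using hop Set.univ (subset_refl _) isOpen_univ
        apply Stmt16Aux.eq_of_eqOn_open (hf.iterate _) differentiable_id hSopen
          ⟨f^[k] 0, Set.mem_range_self 0⟩
        rintro x ⟨z, rfl⟩
        have h1 : f^[(n - k) + k] z = f^[k] z := by
          rw [show (n - k) + k = n by omega]
          exact congrFun hiter z
        rw [Function.iterate_add_apply] at h1
        simpa using h1
    obtain ⟨a, b, ha, hab⟩ := Stmt16Aux.main1 f hf (n - k) hm hidm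
    exact ⟨a, b, ha, hab⟩
end

section
/- Let f : ℝ² → ℝ² be continuous with f ∘ f = f, f(x,y) = (g(x,y), 0) where g is C¹, g(x,0) = x for all x, and ∂g/∂x ≠ 0 everywhere on an open set U ⊇ ℝ×{0} such that each horizontal slice U ∩ (ℝ×{y}) is connected. Then φ : U → φ(U) given by φ(x,y) = (g(x,y), y) is a C¹-diffeomorphism onto its image conjugating f|_U with the projection P(x,y) = (x,0), i.e. φ ∘ f = P ∘ φ on U. -/
open Filter Topology

theorem stmt_19 (U : Set (ℝ × ℝ)) (hU : IsOpen U)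
    (hUx : Set.univ ×ˢ ({0} : Set ℝ) ⊆ U)
    (hslice : ∀ y : ℝ, Convex ℝ {x : ℝ | (x, y) ∈ U})
    (g : ℝ × ℝ → ℝ) (hg : ContDiff ℝ 1 g)
    (hgx : ∀ x : ℝ, g (x, 0) = x)
    (hdx : ∀ p ∈ U, fderiv ℝ g p (1, 0) ≠ 0)
    (f : ℝ × ℝ → ℝ × ℝ) (hfdef : f = fun p => (g p, 0))
    (hidem : f ∘ f = f) :
    let φ : ℝ × ℝ → ℝ × ℝ := fun p => (g p, p.2)
    let P : ℝ × ℝ → ℝ × ℝ := fun p => (p.1, 0)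
    Set.InjOn φ U ∧ ContDiffOn ℝ 1 φ U ∧ IsOpen (φ '' U) ∧
      (∃ ψ : ℝ × ℝ → ℝ × ℝ, ContDiffOn ℝ 1 ψ (φ '' U) ∧
        (∀ p ∈ U, ψ (φ p) = p) ∧ ∀ q ∈ φ '' U, φ (ψ q) = q) ∧
      ∀ p ∈ U, φ (f p) = P (φ p) := by
  intro φ P
  have hgdiff : Differentiable ℝ g := hg.differentiable one_ne_zero
  -- formula for the total derivative of g
  have hfd : ∀ p v : ℝ × ℝ,
      fderiv ℝ g p v = fderiv ℝ g p (1, 0) * v.1 + fderiv ℝ g p (0, 1) * v.2 := by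
    intro p v
    have hv : v = v.1 • ((1 : ℝ), (0 : ℝ)) + v.2 • ((0 : ℝ), (1 : ℝ)) := by
      simp [Prod.ext_iff]
    conv_lhs => rw [hv]
    rw [map_add, map_smul, map_smul]
    simp [mul_comm]
  -- injectivity
  have hinj : Set.InjOn φ U := by
    intro p hp q hq hpq
    have hy : p.2 = q.2 := (Prod.ext_iff.1 hpq).2
    have hgv : g p = g q := (Prod.ext_iff.1 hpq).1
    have key : ∀ x1 x2 : ℝ, x1 < x2 → (x1, p.2) ∈ U → (x2, p.2) ∈ U →
        g (x1, p.2) = g (x2, p.2) → False := by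
      intro x1 x2 hlt h1 h2 heq
      set y := p.2
      have hsub : Set.Icc x1 x2 ⊆ {x : ℝ | (x, y) ∈ U} :=
        (hslice y).ordConnected.out h1 h2
      have hcont : ContinuousOn (fun x => g (x, y)) (Set.Icc x1 x2) :=
        (hg.continuous.comp (continuous_id.prodMk continuous_const)).continuousOn
      have hder : ∀ x ∈ Set.Ioo x1 x2,
          HasDerivAt (fun x => g (x, y)) (fderiv ℝ g (x, y) (1, 0)) x := by
        intro x _
        have h1' : HasDerivAt (fun x : ℝ => (x, y)) ((1 : ℝ), (0 : ℝ)) x :=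
          (hasDerivAt_id x).prodMk (hasDerivAt_const x y)
        exact (hgdiff (x, y)).hasFDerivAt.comp_hasDerivAt x h1'
      obtain ⟨c, hc, hc0⟩ := exists_hasDerivAt_eq_zero hlt hcont heq hder
      exact hdx (c, y) (hsub ⟨hc.1.le, hc.2.le⟩) hc0
    have hp' : (p.1, p.2) ∈ U := by simpa using hp
    have hq' : (q.1, p.2) ∈ U := by rw [hy]; simpa using hq
    have hgp : g (p.1, p.2) = g (q.1, p.2) := by
      rw [Prod.mk.eta, hy, Prod.mk.eta]; exact hgv
    rcases lt_trichotomy p.1 q.1 with h | h | h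
    · exact absurd hgp (fun hh => key p.1 q.1 h hp' hq' hh)
    · exact Prod.ext h hy
    · exact absurd hgp.symm (fun hh => key q.1 p.1 h hq' hp' hh)
  -- smoothness of φ
  have hφcd : ContDiff ℝ 1 φ := hg.prodMk contDiff_snd
  -- strict derivative of φ is an equivalence at each point of U
  have hstrict : ∀ p ∈ U, ∃ E : (ℝ × ℝ) ≃L[ℝ] (ℝ × ℝ),
      HasStrictFDerivAt φ (E : (ℝ × ℝ) →L[ℝ] (ℝ × ℝ)) p := by
    intro p hp
    set a := fderiv ℝ g p (1, 0) with ha_def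
    set b := fderiv ℝ g p (0, 1) with hb_def
    have ha : a ≠ 0 := hdx p hp
    set L : (ℝ × ℝ) →L[ℝ] (ℝ × ℝ) :=
      (fderiv ℝ g p).prod (ContinuousLinearMap.snd ℝ ℝ ℝ) with hL
    set M : (ℝ × ℝ) →L[ℝ] (ℝ × ℝ) :=
      (a⁻¹ • (ContinuousLinearMap.fst ℝ ℝ ℝ - b • ContinuousLinearMap.snd ℝ ℝ ℝ)).prod
        (ContinuousLinearMap.snd ℝ ℝ ℝ) with hM
    have hleft : Function.LeftInverse M L := by
      intro v
      have := hfd p v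
      simp only [hL, hM, ContinuousLinearMap.prod_apply, ContinuousLinearMap.coe_snd',
        ContinuousLinearMap.coe_fst', ContinuousLinearMap.smul_apply,
        ContinuousLinearMap.sub_apply]
      rw [this]
      ext <;> simp <;> field_simp
      all_goals (rw [ha_def, hb_def]; ring)
    have hright : Function.RightInverse M L := by
      intro v
      simp only [hL, hM, ContinuousLinearMap.prod_apply, ContinuousLinearMap.coe_snd',
        ContinuousLinearMap.coe_fst', ContinuousLinearMap.smul_apply,
        ContinuousLinearMap.sub_apply]
      rw [smul_eq_mul, smul_eq_mul] at *
      rw [hfd]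
      ext <;> simp
      all_goals field_simp
      all_goals ring
    refine ⟨ContinuousLinearEquiv.equivOfInverse L M hleft hright, ?_⟩
    have h1 : HasStrictFDerivAt g (fderiv ℝ g p) p :=
      hg.contDiffAt.hasStrictFDerivAt one_ne_zero
    have h2 : HasStrictFDerivAt (fun q : ℝ × ℝ => q.2)
        (ContinuousLinearMap.snd ℝ ℝ ℝ) p :=
      (ContinuousLinearMap.snd ℝ ℝ ℝ).hasStrictFDerivAt
    exact h1.prodMk h2
  -- openness of the image
  have hopen : IsOpen (φ '' U) := by
    rw [isOpen_iff_mem_nhds]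
    rintro q ⟨p, hp, rfl⟩
    obtain ⟨E, hE⟩ := hstrict p hp
    rw [← hE.map_nhds_eq_of_equiv]
    exact Filter.image_mem_map (hU.mem_nhds hp)
  -- the inverse map
  set ψ := Function.invFunOn φ U with hψdef
  have hψl : ∀ p ∈ U, ψ (φ p) = p := fun p hp => hinj.leftInvOn_invFunOn hp
  have hψr : ∀ q ∈ φ '' U, φ (ψ q) = q := by
    rintro q ⟨p, hp, rfl⟩
    exact Function.invFunOn_eq ⟨p, hp, rfl⟩
  have hψmem : ∀ q ∈ φ '' U, ψ q ∈ U := by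
    rintro q ⟨p, hp, rfl⟩
    exact Function.invFunOn_mem ⟨p, hp, rfl⟩
  have hψc : ContDiffOn ℝ 1 ψ (φ '' U) := by
    rintro q ⟨p, hp, rfl⟩
    obtain ⟨E, hE⟩ := hstrict p hp
    set li := hE.localInverse φ E p with hli_def
    have hev : ψ =ᶠ[𝓝 (φ p)] li := by
      have h1 : ∀ᶠ q' in 𝓝 (φ p), φ (li q') = q' := hE.eventually_right_inverse
      have h2 : ∀ᶠ q' in 𝓝 (φ p), li q' ∈ U :=
        hE.localInverse_tendsto (hU.mem_nhds hp)
      have h3 : ∀ᶠ q' in 𝓝 (φ p), q' ∈ φ '' U := hopen.mem_nhds ⟨p, hp, rfl⟩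
      filter_upwards [h1, h2, h3] with q' e1 e2 e3
      exact hinj (hψmem q' e3) e2 (by rw [hψr q' e3, e1])
    have hli : ContDiffAt ℝ 1 li (φ p) :=
      hφcd.contDiffAt.to_localInverse hE.hasFDerivAt one_ne_zero
    exact (hli.congr_of_eventuallyEq hev).contDiffWithinAt
  refine ⟨hinj, hφcd.contDiffOn, hopen, ⟨ψ, hψc, hψl, hψr⟩, ?_⟩
  intro p hp
  simp [φ, P, hfdef, hgx]
end
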